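/- Let (λ_j)_{j≥0} and (a_j)_{j≥0} be nonnegative real sequences with ∑_{i=0}^∞ λ_i a_i < ∞, set Λ_k := ∑_{i=0}^k λ_i, and let (e_j)_{j≥0} be a sequence of nonnegative reals such that a_{k+1} ≤ a_k + e_k for all k and ∑_{i=0}^∞ Λ_i e_i < ∞. Then: (i) for every k with Λ_k > 0, a_k ≤ (1/Λ_k)·(∑_{i=0}^∞ λ_i a_i + ∑_{i=0}^∞ Λ_i e_i); (ii) (Λ_k − Λ_{⌈k/2⌉})·a_k → 0 as k → ∞; in particular, if inf_j λ_j > 0 then (k+1)·a_k → 0. -/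

import Mathlib

open Finset Filter

/-- Lemma 1, Part 2 (monotonicity up to errors): if `(λ_j)`, `(a_j)` are nonnegative with
`∑ λ_i a_i < ∞`, `(e_j)` is nonnegative with `a_{k+1} ≤ a_k + e_k` for all `k` and
`∑ Λ_i e_i < ∞`, then (i) `a_k ≤ (1/Λ_k)(∑ λ_i a_i + ∑ Λ_i e_i)` whenever `Λ_k > 0`,
(ii) `(Λ_k − Λ_{⌈k/2⌉}) a_k → 0`; in particular, if `inf λ_j > 0` then `(k+1) a_k → 0`. -/
theorem summable_sequence_rates_monotone_up_to_errors
    (lam a e : ℕ → ℝ)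
    (hlam : ∀ n, 0 ≤ lam n) (ha : ∀ n, 0 ≤ a n) (he : ∀ n, 0 ≤ e n)
    (hsum : Summable (fun i => lam i * a i))
    (hrec : ∀ k, a (k + 1) ≤ a k + e k)
    (hesum : Summable (fun i => (∑ j ∈ Finset.range (i + 1), lam j) * e i)) :
    (∀ k : ℕ, 0 < (∑ i ∈ Finset.range (k + 1), lam i) →
        a k ≤ (1 / ∑ i ∈ Finset.range (k + 1), lam i) *
          ((∑' i, lam i * a i) + ∑' i, (∑ j ∈ Finset.range (i + 1), lam j) * e i)) ∧
    Filter.Tendsto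
      (fun k : ℕ =>
        ((∑ i ∈ Finset.range (k + 1), lam i) -
          ∑ i ∈ Finset.range ((k + 1) / 2 + 1), lam i) * a k)
      Filter.atTop (nhds 0) ∧
    ((∃ ε > (0 : ℝ), ∀ j, ε ≤ lam j) →
      Filter.Tendsto (fun k : ℕ => ((k : ℝ) + 1) * a k) Filter.atTop (nhds 0)) := by
  -- Step A: a k ≤ a i + ∑_{j ∈ [i,k)} e j
  have hA : ∀ i k, i ≤ k → a k ≤ a i + ∑ j ∈ Finset.Ico i k, e j := by
    intro i k hik
    induction k with
    | zero => simp [Nat.le_zero.mp hik]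
    | succ k ih =>
      rcases Nat.lt_or_ge i (k + 1) with h | h
      · have hik' : i ≤ k := Nat.lt_succ_iff.mp h
        have h1 := ih hik'
        have h2 := hrec k
        rw [Finset.sum_Ico_succ_top hik']
        linarith
      · have hi : i = k + 1 := le_antisymm hik h
        simp [hi]
  -- Step B: the main summation estimate
  have hB : ∀ m k, m ≤ k →
      (∑ i ∈ Finset.Ico m (k + 1), lam i) * a k
        ≤ (∑ i ∈ Finset.Ico m (k + 1), lam i * a i)
          + ∑ j ∈ Finset.Ico m k, (∑ i ∈ Finset.range (j + 1), lam i) * e j := by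
    intro m k hmk
    rw [Finset.sum_mul]
    have step1 : ∑ i ∈ Finset.Ico m (k + 1), lam i * a k
        ≤ ∑ i ∈ Finset.Ico m (k + 1),
            (lam i * a i + ∑ j ∈ Finset.Ico i k, lam i * e j) := by
      refine Finset.sum_le_sum fun i hi => ?_
      have hik : i ≤ k := Nat.lt_succ_iff.mp (Finset.mem_Ico.mp hi).2
      have h1 := hA i k hik
      have h2 : lam i * a k ≤ lam i * (a i + ∑ j ∈ Finset.Ico i k, e j) :=
        mul_le_mul_of_nonneg_left h1 (hlam i)
      rw [← Finset.mul_sum]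
      linarith
    refine step1.trans ?_
    rw [Finset.sum_add_distrib]
    refine add_le_add le_rfl ?_
    -- swap the double sum
    have hswap : ∑ i ∈ Finset.Ico m (k + 1), ∑ j ∈ Finset.Ico i k, lam i * e j
        = ∑ j ∈ Finset.Ico m k, ∑ i ∈ Finset.Ico m (j + 1), lam i * e j := by
      rw [Finset.sum_Ico_succ_top hmk]
      simp only [Finset.Ico_self, Finset.sum_empty, add_zero]
      exact Finset.sum_Ico_Ico_comm m k (fun i j => lam i * e j)
    rw [hswap]
    refine Finset.sum_le_sum fun j hj => ?_
    rw [← Finset.sum_mul]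
    refine mul_le_mul_of_nonneg_right ?_ (he j)
    refine Finset.sum_le_sum_of_subset_of_nonneg ?_ (fun i _ _ => hlam i)
    intro i hi
    simp only [Finset.mem_Ico] at hi
    simp only [Finset.mem_range]
    exact hi.2
  set S := ∑' i, lam i * a i with hS
  set T := ∑' i, (∑ j ∈ Finset.range (i + 1), lam j) * e i with hT
  have hTnn : ∀ i, 0 ≤ (∑ j ∈ Finset.range (i + 1), lam j) * e i := fun i =>
    mul_nonneg (Finset.sum_nonneg fun j _ => hlam j) (he i)
  have hSnn : ∀ i, 0 ≤ lam i * a i := fun i => mul_nonneg (hlam i) (ha i)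
  -- tail bounds
  have htail : ∀ (f : ℕ → ℝ), (∀ i, 0 ≤ f i) → Summable f → ∀ m n : ℕ,
      ∑ i ∈ Finset.Ico m n, f i ≤ ∑' i, f (i + m) := by
    intro f hf hfs m n
    rw [Finset.sum_Ico_eq_sum_range]
    have hs : Summable fun i => f (i + m) := (summable_nat_add_iff m).2 hfs
    have := Summable.sum_le_tsum (Finset.range (n - m)) (fun i _ => hf _) hs
    refine le_trans (le_of_eq ?_) this
    refine Finset.sum_congr rfl fun i _ => ?_
    rw [add_comm]
  -- Part (i)
  have part1 : ∀ k : ℕ, 0 < (∑ i ∈ Finset.range (k + 1), lam i) →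
      a k ≤ (1 / ∑ i ∈ Finset.range (k + 1), lam i) * (S + T) := by
    intro k hpos
    have h1 := hB 0 k (Nat.zero_le k)
    simp only [← Finset.range_eq_Ico] at h1
    have h2 : ∑ i ∈ Finset.range (k + 1), lam i * a i ≤ S :=
      Summable.sum_le_tsum _ (fun i _ => hSnn i) hsum
    have h3 : ∑ j ∈ Finset.range k, (∑ i ∈ Finset.range (j + 1), lam i) * e j ≤ T :=
      Summable.sum_le_tsum _ (fun i _ => hTnn i) hesum
    rw [one_div, ← div_eq_inv_mul, le_div_iff₀ hpos]
    nlinarith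
  -- Part (ii)
  set m : ℕ → ℕ := fun k => (k + 1) / 2 + 1 with hm
  have hmtop : Tendsto m atTop atTop := by
    refine tendsto_atTop_atTop.2 fun b => ⟨2 * b, fun k hk => ?_⟩
    simp only [hm]
    omega
  have htailS : Tendsto (fun n => ∑' i, lam (i + n) * a (i + n)) atTop (nhds 0) :=
    tendsto_sum_nat_add (fun i => lam i * a i)
  have htailT : Tendsto
      (fun n => ∑' i, (∑ j ∈ Finset.range ((i + n) + 1), lam j) * e (i + n)) atTop (nhds 0) :=
    tendsto_sum_nat_add (fun i => (∑ j ∈ Finset.range (i + 1), lam j) * e i)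
  set g : ℕ → ℝ := fun k =>
    (∑' i, lam (i + m k) * a (i + m k))
      + ∑' i, (∑ j ∈ Finset.range ((i + m k) + 1), lam j) * e (i + m k) with hg
  have hgtend : Tendsto g atTop (nhds 0) := by
    have := (htailS.comp hmtop).add (htailT.comp hmtop)
    simpa using this
  have hFnn : ∀ k : ℕ, 0 ≤ ((∑ i ∈ Finset.range (k + 1), lam i) -
      ∑ i ∈ Finset.range ((k + 1) / 2 + 1), lam i) * a k := by
    intro k
    refine mul_nonneg ?_ (ha k)
    have : (∑ i ∈ Finset.range ((k + 1) / 2 + 1), lam i)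
        ≤ ∑ i ∈ Finset.range (k + 1), lam i := by
      refine Finset.sum_le_sum_of_subset_of_nonneg ?_ (fun i _ _ => hlam i)
      exact Finset.range_subset_range.2 (by omega)
    linarith
  have hdiff : ∀ k : ℕ, ((∑ i ∈ Finset.range (k + 1), lam i) -
      ∑ i ∈ Finset.range ((k + 1) / 2 + 1), lam i)
      = ∑ i ∈ Finset.Ico (m k) (k + 1), lam i := by
    intro k
    rw [Finset.sum_Ico_eq_sub _ (by simp only [hm]; omega)]
  have hFle : ∀ k : ℕ, ((∑ i ∈ Finset.range (k + 1), lam i) -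
      ∑ i ∈ Finset.range ((k + 1) / 2 + 1), lam i) * a k ≤ g k := by
    intro k
    rw [hdiff k]
    rcases Nat.lt_or_ge k (m k) with hk | hk
    · -- then Ico (m k) (k+1) might be small; in fact k = 0 gives m 0 = 1 > 0
      have hle : k + 1 ≤ m k := hk
      rw [Finset.Ico_eq_empty (by omega)]
      simp only [Finset.sum_empty, zero_mul]
      refine add_nonneg (tsum_nonneg fun i => hSnn _) (tsum_nonneg fun i => hTnn _)
    · have h1 := hB (m k) k hk
      have h2 : ∑ i ∈ Finset.Ico (m k) (k + 1), lam i * a i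
          ≤ ∑' i, lam (i + m k) * a (i + m k) :=
        htail _ hSnn hsum (m k) (k + 1)
      have h3 : ∑ j ∈ Finset.Ico (m k) k, (∑ i ∈ Finset.range (j + 1), lam i) * e j
          ≤ ∑' i, (∑ j ∈ Finset.range ((i + m k) + 1), lam j) * e (i + m k) :=
        htail _ hTnn hesum (m k) k
      simp only [hg]
      linarith
  have part2 : Tendsto
      (fun k : ℕ =>
        ((∑ i ∈ Finset.range (k + 1), lam i) -
          ∑ i ∈ Finset.range ((k + 1) / 2 + 1), lam i) * a k)
      atTop (nhds 0) := squeeze_zero hFnn hFle hgtend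
  refine ⟨part1, part2, ?_⟩
  -- Part (iii)
  rintro ⟨ε, hε, hεlam⟩
  have hbound : ∀ k : ℕ, 2 ≤ k → ((k : ℝ) + 1) * a k ≤
      (4 / ε) * (((∑ i ∈ Finset.range (k + 1), lam i) -
        ∑ i ∈ Finset.range ((k + 1) / 2 + 1), lam i) * a k) := by
    intro k hk2
    rw [hdiff k]
    set c : ℕ := k + 1 - m k with hc
    have hcard : (Finset.Ico (m k) (k + 1)).card = c := Nat.card_Ico _ _
    have hsumge : (c : ℝ) * ε ≤ ∑ i ∈ Finset.Ico (m k) (k + 1), lam i := by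
      have := Finset.card_nsmul_le_sum (Finset.Ico (m k) (k + 1)) lam ε
        (fun i _ => hεlam i)
      rw [hcard] at this
      simpa [nsmul_eq_mul] using this
    have hnat : k + 1 ≤ 4 * c := by simp only [hc, hm]; omega
    have hnatR : (k : ℝ) + 1 ≤ 4 * (c : ℝ) := by exact_mod_cast hnat
    have hL : (0:ℝ) ≤ ∑ i ∈ Finset.Ico (m k) (k + 1), lam i :=
      Finset.sum_nonneg fun i _ => hlam i
    have hak := ha k
    have h1 : ((k : ℝ) + 1) * a k ≤ 4 * (c : ℝ) * a k :=
      mul_le_mul_of_nonneg_right hnatR hak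
    have h2 : (c : ℝ) * ε * a k ≤ (∑ i ∈ Finset.Ico (m k) (k + 1), lam i) * a k :=
      mul_le_mul_of_nonneg_right hsumge hak
    have hεne : ε ≠ 0 := ne_of_gt hε
    have h3 : 4 * (c : ℝ) * a k = (4 / ε) * ((c : ℝ) * ε * a k) := by
      field_simp
    have h4 : (4 / ε) * ((c : ℝ) * ε * a k) ≤
        (4 / ε) * ((∑ i ∈ Finset.Ico (m k) (k + 1), lam i) * a k) :=
      mul_le_mul_of_nonneg_left h2 (by positivity)
    linarith
  have hgoal0 : Tendsto (fun k : ℕ => (4 / ε) *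
      (((∑ i ∈ Finset.range (k + 1), lam i) -
        ∑ i ∈ Finset.range ((k + 1) / 2 + 1), lam i) * a k)) atTop (nhds 0) := by
    simpa using part2.const_mul (4 / ε)
  refine squeeze_zero' ?_ ?_ hgoal0
  · exact Eventually.of_forall fun k => mul_nonneg (by positivity) (ha k)
  · filter_upwards [eventually_ge_atTop 2] with k hk using hbound k hk
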